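/- For every integer k, there exists a strongly connected digraph D with chromatic number greater than k that contains no 3-spindle and no (2+2)-bispindle. -/

import Mathlib

universe u

section Defs
variable {V : Type u}

/-- `l` is a directed path from `x` to `y` in the digraph with arc relation `A`. -/
def DiPath (A : V → V → Prop) (x y : V) (l : List V) : Prop :=
  l.Chain' A ∧ l.Nodup ∧ l.head? = some x ∧ l.getLast? = some y

/-- The internal vertices of a path given as a list. -/
def internals (l : List V) : List V := l.tail.dropLast

/-- `(a,b)` is an arc of the directed cycle represented by the list `l`. -/
def cycArc (l : List V) (a b : V) : Prop :=
  (a, b) ∈ l.zip l.tail ∨ (l.getLast? = some a ∧ l.head? = some b)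

/-- `l` represents a directed cycle of the digraph with arc relation `A`;
its length (number of arcs = number of vertices) is `l.length`. -/
def DiCycle (A : V → V → Prop) (l : List V) : Prop :=
  l ≠ [] ∧ l.Chain' A ∧ l.Nodup ∧
    ∀ a b, l.getLast? = some a → l.head? = some b → A a b

/-- A digraph is strongly connected. -/
def StrongConn (A : V → V → Prop) : Prop := ∀ x y : V, ∃ l, DiPath A x y l

/-- The chromatic number of a digraph: that of its underlying undirected graph. -/
noncomputable def dchrom (A : V → V → Prop) : ℕ∞ :=
  (SimpleGraph.fromRel A).chromaticNumber

/-- Two paths are internally disjoint. -/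
def IntDisj (P Q : List V) : Prop :=
  (∀ v ∈ internals P, v ∉ internals Q) ∧ (∀ v ∈ internals Q, v ∉ internals P)

/-- `D` contains a subdivision of the bispindle `B(k1,k2;k3)`: vertices `x`, `y`
and three pairwise internally disjoint dipaths, two from `x` to `y` of lengths
at least `k1` and `k2`, and one from `y` to `x` of length at least `k3`. -/
def SubdivB (A : V → V → Prop) (k1 k2 k3 : ℕ) : Prop :=
  ∃ (x y : V) (P1 P2 P3 : List V),
    DiPath A x y P1 ∧ DiPath A x y P2 ∧ DiPath A y x P3 ∧
    k1 + 1 ≤ P1.length ∧ k2 + 1 ≤ P2.length ∧ k3 + 1 ≤ P3.length ∧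
    P1 ≠ P2 ∧ IntDisj P1 P2 ∧ IntDisj P1 P3 ∧ IntDisj P2 P3

/-- The length of the subpath of the cycle `l` from `a` to `b` (number of arcs). -/
def cycDist [DecidableEq V] (l : List V) (a b : V) : ℕ :=
  (l.rotate (l.idxOf a)).idxOf b

/-- The subpath (vertex list) of the cycle `l` from `a` to `b`. -/
def cycSub [DecidableEq V] (l : List V) (a b : V) : List V :=
  (l.rotate (l.idxOf a)).take (cycDist l a b + 1)

/-- The intersection of the cycles `Ci` and `Cj` is the common directed subpath
from `a` to `b`, having at most `k` vertices. -/
def InterPath [DecidableEq V] (k : ℕ) (Ci Cj : List V) (a b : V) : Prop :=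
  a ∈ Ci ∧ b ∈ Cj ∧ (∀ x, (x ∈ Ci ∧ x ∈ Cj) ↔ x ∈ cycSub Ci a b) ∧
  cycSub Ci a b = cycSub Cj a b ∧ (cycSub Ci a b).length ≤ k

/-- A `k`-suitable collection of directed cycles: all cycles have length at least `8k`
and any two distinct cycles intersect on a directed subpath of at most `k` vertices. -/
def Suitable [DecidableEq V] (A : V → V → Prop) (k : ℕ) (𝒞 : Set (List V)) : Prop :=
  (∀ C ∈ 𝒞, DiCycle A C ∧ 8 * k ≤ C.length) ∧
  ∀ C ∈ 𝒞, ∀ C' ∈ 𝒞, C ≠ C' → (∃ x, x ∈ C ∧ x ∈ C') → ∃ a b, InterPath k C C' a b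

/-- Adjacency in the intersection graph of a collection of cycles. -/
def interRel (𝒞 : Set (List V)) : List V → List V → Prop :=
  fun C C' => C ∈ 𝒞 ∧ C' ∈ 𝒞 ∧ ∃ x, x ∈ C ∧ x ∈ C'

/-- `(a,b)` is an arc of the union of the cycles of `𝒞`. -/
def unionArc (𝒞 : Set (List V)) (a b : V) : Prop := ∃ C ∈ 𝒞, cycArc C a b

/-- A graph is 2-connected. -/
def TwoConnectedG {W : Type*} (G : SimpleGraph W) : Prop :=
  G.Connected ∧ ∀ w : W, (G.induce {u | u ≠ w}).Connected

end Defs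

/-- A 3-spindle: three pairwise internally disjoint dipaths from `x` to `y`. -/
def Spindle3 {V : Type u} (A : V → V → Prop) : Prop :=
  ∃ (x y : V) (P1 P2 P3 : List V),
    DiPath A x y P1 ∧ DiPath A x y P2 ∧ DiPath A x y P3 ∧
    2 ≤ P1.length ∧ 2 ≤ P2.length ∧ 2 ≤ P3.length ∧
    P1 ≠ P2 ∧ P1 ≠ P3 ∧ P2 ≠ P3 ∧
    IntDisj P1 P2 ∧ IntDisj P1 P3 ∧ IntDisj P2 P3

/-- A `(2+2)`-bispindle: two `(x,y)`-dipaths and two `(y,x)`-dipaths, all pairwise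
internally disjoint. -/
def Bispindle22 {V : Type u} (A : V → V → Prop) : Prop :=
  ∃ (x y : V) (P1 P2 P3 P4 : List V),
    DiPath A x y P1 ∧ DiPath A x y P2 ∧ DiPath A y x P3 ∧ DiPath A y x P4 ∧
    2 ≤ P1.length ∧ 2 ≤ P2.length ∧ 2 ≤ P3.length ∧ 2 ≤ P4.length ∧
    P1 ≠ P2 ∧ P3 ≠ P4 ∧
    IntDisj P1 P2 ∧ IntDisj P1 P3 ∧ IntDisj P1 P4 ∧
    IntDisj P2 P3 ∧ IntDisj P2 P4 ∧ IntDisj P3 P4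

namespace Stmt13Aux

variable {V : Type u} {W : Type*} {A : V → V → Prop} {x y : V}

lemma dipath_ne_nil {l : List V} (h : DiPath A x y l) : l ≠ [] := by
  rintro rfl; simp [DiPath] at h

lemma dipath_cons_decomp {l : List V} (h : DiPath A x y l) : ∃ t, l = x :: t := by
  obtain ⟨_, _, hh, _⟩ := h
  cases l with
  | nil => simp at hh
  | cons a t => simp only [List.head?_cons, Option.some.injEq] at hh; exact ⟨t, by rw [hh]⟩

lemma getLast?_cons_ne {t : List V} (x : V) (ht : t ≠ []) :
    (x :: t).getLast? = t.getLast? := by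
  rw [show x :: t = [x] ++ t from rfl, List.getLast?_append,
    List.getLast?_eq_getLast ht]
  rfl

lemma mem_of_getLast? {l : List V} {a : V} (h : l.getLast? = some a) : a ∈ l := by
  cases l with
  | nil => simp at h
  | cons b t =>
    rw [List.getLast?_eq_getLast (l := b :: t) (by simp), Option.some.injEq] at h
    rw [← h]; exact List.getLast_mem _

lemma dipath_single (x : V) (A : V → V → Prop) : DiPath A x x [x] := by
  refine ⟨List.isChain_singleton _, by simp, rfl, rfl⟩

lemma dipath_self {l : List V} (h : DiPath A x x l) : l = [x] := by
  obtain ⟨t, rfl⟩ := dipath_cons_decomp h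
  cases t with
  | nil => rfl
  | cons b u =>
    exfalso
    obtain ⟨_, hnd, _, hl⟩ := h
    rw [getLast?_cons_ne x (by simp)] at hl
    have : x ∈ b :: u := mem_of_getLast? hl
    simp only [List.nodup_cons] at hnd
    exact hnd.1 this

lemma dipath_mem_head {l : List V} (h : DiPath A x y l) : x ∈ l := by
  obtain ⟨t, rfl⟩ := dipath_cons_decomp h; simp

lemma dipath_cons {a b : V} {t : List V} (h : DiPath A x y (a :: b :: t)) :
    a = x ∧ A a b ∧ DiPath A b y (b :: t) := by
  obtain ⟨hc, hnd, hh, hl⟩ := h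
  rw [List.Chain', List.isChain_cons_cons] at hc
  simp only [List.head?_cons, Option.some.injEq] at hh
  refine ⟨hh, hc.1, hc.2, (List.nodup_cons.mp hnd).2, rfl, ?_⟩
  rw [getLast?_cons_ne a (by simp)] at hl; exact hl

lemma dipath_ne {l : List V} (h : DiPath A x y l) (h2 : 2 ≤ l.length) : x ≠ y := by
  obtain ⟨t, rfl⟩ := dipath_cons_decomp h
  cases t with
  | nil => simp at h2
  | cons b u =>
    rintro rfl
    have := dipath_self h
    simp at this

lemma internals_sublist (l : List V) : (internals l).Sublist l :=
  ((l.tail.dropLast_sublist).trans (l.tail_sublist))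

lemma mem_of_internals {l : List V} {a : V} (h : a ∈ internals l) : a ∈ l :=
  (internals_sublist l).mem h

lemma mem_internals {l : List V} {a : V} (hh : l.head? = some x) (hl : l.getLast? = some y)
    (ha : a ∈ l) (hax : a ≠ x) (hay : a ≠ y) : a ∈ internals l := by
  cases l with
  | nil => simp at ha
  | cons b t =>
    simp only [List.head?_cons, Option.some.injEq] at hh
    subst hh
    have hat : a ∈ t := by
      rcases List.mem_cons.mp ha with h | h
      · exact absurd h hax
      · exact h
    have htne : t ≠ [] := by rintro rfl; simp at hat
    rw [getLast?_cons_ne _ htne, List.getLast?_eq_getLast htne, Option.some.injEq] at hl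
    have : t.dropLast ++ [t.getLast htne] = t := List.dropLast_append_getLast htne
    rw [← this] at hat
    rcases List.mem_append.mp hat with h | h
    · simpa [internals] using h
    · simp only [List.mem_singleton] at h
      rw [hl] at h; exact absurd h hay

lemma head_not_internal {l : List V} (h : DiPath A x y l) : x ∉ internals l := by
  obtain ⟨t, rfl⟩ := dipath_cons_decomp h
  intro hx
  have hxt : x ∈ t := (t.dropLast_sublist).mem (by simpa [internals] using hx)
  exact (List.nodup_cons.mp h.2.1).1 hxt

lemma last_not_internal {l : List V} (h : DiPath A x y l) : y ∉ internals l := by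
  obtain ⟨t, rfl⟩ := dipath_cons_decomp h
  intro hy
  simp only [internals, List.tail_cons] at hy
  have htne : t ≠ [] := by rintro rfl; simp at hy
  have hl := h.2.2.2
  rw [getLast?_cons_ne _ htne, List.getLast?_eq_getLast htne, Option.some.injEq] at hl
  have hnd : t.Nodup := (List.nodup_cons.mp h.2.1).2
  rw [← List.dropLast_append_getLast htne] at hnd
  rw [List.nodup_append] at hnd
  exact hnd.2.2 y hy y (by simp [hl]) rfl

/-- second vertex of a path of length ≥ 2 -/
lemma sec_spec {l : List V} (h : DiPath A x y l) (h2 : 2 ≤ l.length) :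
    ∃ s, l.tail.head? = some s ∧ A x s ∧ DiPath A s y l.tail ∧ (s = y ∨ s ∈ internals l) := by
  obtain ⟨t, rfl⟩ := dipath_cons_decomp h
  cases t with
  | nil => simp at h2
  | cons b u =>
    obtain ⟨-, hab, hbp⟩ := dipath_cons h
    refine ⟨b, rfl, hab, hbp, ?_⟩
    by_cases hby : b = y
    · exact Or.inl hby
    · refine Or.inr (mem_internals h.2.2.1 h.2.2.2 (by simp) ?_ hby)
      rintro rfl
      exact (List.nodup_cons.mp h.2.1).1 (by simp)

lemma sec_ne {P Q : List V} (hP : DiPath A x y P) (hQ : DiPath A x y Q)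
    (hne : P ≠ Q) (hd : IntDisj P Q) (h2P : 2 ≤ P.length) (h2Q : 2 ≤ Q.length)
    {s t : V} (hs : P.tail.head? = some s ∧ A x s ∧ DiPath A s y P.tail ∧ (s = y ∨ s ∈ internals P))
    (ht : Q.tail.head? = some t ∧ A x t ∧ DiPath A t y Q.tail ∧ (t = y ∨ t ∈ internals Q)) :
    s ≠ t := by
  rintro rfl
  rcases hs.2.2.2 with hsy | hsi
  · rcases ht.2.2.2 with hty | hti
    · -- both second vertices equal y : both paths are [x, y]
      apply hne
      obtain ⟨tp, rfl⟩ := dipath_cons_decomp hP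
      obtain ⟨tq, rfl⟩ := dipath_cons_decomp hQ
      have h1 : tp = [y] := by
        have := dipath_self (show DiPath A y y tp by
          have h' := hs.2.2.1; simp only [List.tail_cons] at h'; rwa [hsy] at h')
        exact this
      have h2 : tq = [y] := by
        have := dipath_self (show DiPath A y y tq by
          have h' := ht.2.2.1; simp only [List.tail_cons] at h'; rwa [hsy] at h')
        exact this
      rw [h1, h2]
    · rw [hsy] at hti; exact last_not_internal hQ hti
  · rcases ht.2.2.2 with hty | hti
    · rw [hty] at hsi; exact last_not_internal hP hsi
    · exact hd.1 s hsi hti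

lemma dipath_decomp_last {l : List V} (h : DiPath A x y l) :
    l.dropLast ++ [y] = l := by
  have hne : l ≠ [] := dipath_ne_nil h
  have hl : l.getLast hne = y := by
    have h2 := h.2.2.2
    rw [List.getLast?_eq_getLast hne, Option.some.injEq] at h2; exact h2
  rw [← hl]; exact List.dropLast_append_getLast hne

/-- penultimate vertex of a path of length ≥ 2 -/
lemma pen_spec {l : List V} (h : DiPath A x y l) (h2 : 2 ≤ l.length) :
    ∃ p, l.dropLast.getLast? = some p ∧ A p y ∧ DiPath A x p l.dropLast ∧
      (p = x ∨ p ∈ internals l) := by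
  have hne : l ≠ [] := dipath_ne_nil h
  have hdne : l.dropLast ≠ [] := by
    cases l with
    | nil => simp at h2
    | cons a t => cases t with
      | nil => simp at h2
      | cons b u => simp
  have hdecomp : l.dropLast ++ [y] = l := dipath_decomp_last h
  have hp : l.dropLast.getLast? = some (l.dropLast.getLast hdne) := List.getLast?_eq_getLast hdne
  set p := l.dropLast.getLast hdne with hpdef
  have hchain : List.Chain' A (l.dropLast ++ [y]) := by rw [hdecomp]; exact h.1
  rw [List.Chain', List.isChain_append] at hchain
  have harc : A p y := hchain.2.2 p hp y rfl
  have hmem : p ∈ l.dropLast := List.getLast_mem _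
  have hpmem : p ∈ l := (l.dropLast_sublist).mem hmem
  have hnd : (l.dropLast ++ [y]).Nodup := by rw [hdecomp]; exact h.2.1
  rw [List.nodup_append] at hnd
  have hpy : p ≠ y := fun hh => hnd.2.2 p hmem y (by simp) hh
  have hhead : l.dropLast.head? = some x := by
    cases l with
    | nil => simp at h2
    | cons a t => cases t with
      | nil => simp at h2
      | cons b u =>
        have : a = x := by have := h.2.2.1; simpa using this
        simp [this]
  refine ⟨p, hp, harc, ⟨hchain.1, hnd.1, hhead, hp⟩, ?_⟩
  by_cases hpx : p = x
  · exact Or.inl hpx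
  · exact Or.inr (mem_internals h.2.2.1 h.2.2.2 hpmem hpx hpy)

lemma pen_ne {P Q : List V} (hP : DiPath A x y P) (hQ : DiPath A x y Q)
    (hne : P ≠ Q) (hd : IntDisj P Q) (h2P : 2 ≤ P.length) (h2Q : 2 ≤ Q.length)
    {p q : V}
    (hs : P.dropLast.getLast? = some p ∧ A p y ∧ DiPath A x p P.dropLast ∧ (p = x ∨ p ∈ internals P))
    (ht : Q.dropLast.getLast? = some q ∧ A q y ∧ DiPath A x q Q.dropLast ∧ (q = x ∨ q ∈ internals Q)) :
    p ≠ q := by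
  rintro rfl
  rcases hs.2.2.2 with hpx | hpi
  · rcases ht.2.2.2 with hqx | hqi
    · apply hne
      have e1 : P.dropLast = [x] := dipath_self (by rw [← hpx] at hs ⊢; exact hs.2.2.1)
      have e2 : Q.dropLast = [x] := dipath_self (by rw [← hqx] at ht ⊢; exact ht.2.2.1)
      have d1 : P.dropLast ++ [y] = P := by
        have hne' : P ≠ [] := dipath_ne_nil hP
        have := List.dropLast_append_getLast hne'
        have hl : P.getLast hne' = y := by
          have h2 := hP.2.2.2
          rw [List.getLast?_eq_getLast hne', Option.some.injEq] at h2; exact h2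
        rw [hl] at this; exact this
      have d2 : Q.dropLast ++ [y] = Q := by
        have hne' : Q ≠ [] := dipath_ne_nil hQ
        have := List.dropLast_append_getLast hne'
        have hl : Q.getLast hne' = y := by
          have h2 := hQ.2.2.2
          rw [List.getLast?_eq_getLast hne', Option.some.injEq] at h2; exact h2
        rw [hl] at this; exact this
      rw [← d1, ← d2, e1, e2]
    · rw [hpx] at hqi; exact head_not_internal hQ hqi
  · rcases ht.2.2.2 with hqx | hqi
    · rw [hqx] at hpi; exact head_not_internal hP hpi
    · exact hd.1 p hpi hqi

lemma tail_dropLast (l : List V) : l.dropLast.tail = l.tail.dropLast := by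
  cases l with
  | nil => rfl
  | cons a t =>
    cases t with
    | nil => rfl
    | cons b u => simp [List.dropLast_cons₂]

lemma internals_dropLast (l : List V) : internals l.dropLast = (internals l).dropLast := by
  simp only [internals, tail_dropLast]

lemma intdisj_dropLast {P Q : List V} (h : IntDisj P Q) : IntDisj P.dropLast Q.dropLast := by
  constructor
  · intro v hv hv'
    rw [internals_dropLast] at hv hv'
    exact h.1 v ((internals P).dropLast_sublist.mem hv) ((internals Q).dropLast_sublist.mem hv')
  · intro v hv hv'
    rw [internals_dropLast] at hv hv'
    exact h.2 v ((internals Q).dropLast_sublist.mem hv) ((internals P).dropLast_sublist.mem hv')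

lemma internals_map {W : Type*} (g : V → W) (l : List V) :
    internals (l.map g) = (internals l).map g := by
  simp only [internals, List.map_tail, List.map_dropLast]

lemma intdisj_of_map {W : Type*} {g : V → W} {P Q : List V}
    (h : IntDisj (P.map g) (Q.map g)) : IntDisj P Q := by
  constructor
  · intro v hv hv'
    exact h.1 (g v) (by rw [internals_map]; exact List.mem_map_of_mem (f := g) hv)
      (by rw [internals_map]; exact List.mem_map_of_mem (f := g) hv')
  · intro v hv hv'
    exact h.2 (g v) (by rw [internals_map]; exact List.mem_map_of_mem (f := g) hv)
      (by rw [internals_map]; exact List.mem_map_of_mem (f := g) hv')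

lemma dipath_map {W : Type*} {g : V → W} (hg : Function.Injective g) {B : W → W → Prop}
    (harc : ∀ u v, B (g u) (g v) → A u v) {P : List V}
    (h : DiPath B (g x) (g y) (P.map g)) : DiPath A x y P := by
  obtain ⟨hc, hnd, hh, hl⟩ := h
  refine ⟨?_, List.Nodup.of_map g hnd, ?_, ?_⟩
  · rw [List.Chain', List.isChain_map] at hc
    exact hc.imp (fun a b => harc a b)
  · rw [List.head?_map] at hh
    cases hP : P.head? with
    | none => rw [hP] at hh; simp at hh
    | some a =>
      rw [hP] at hh
      simp only [Option.map_some, Option.some.injEq] at hh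
      rw [hg hh]
  · rw [List.getLast?_map] at hl
    cases hP : P.getLast? with
    | none => rw [hP] at hl; simp at hl
    | some a =>
      rw [hP] at hl
      simp only [Option.map_some, Option.some.injEq] at hl
      rw [hg hl]

lemma dipath_map_fwd {W : Type*} {g : V → W} (hg : Function.Injective g) {B : W → W → Prop}
    (harc : ∀ u v, A u v → B (g u) (g v)) {P : List V}
    (h : DiPath A x y P) : DiPath B (g x) (g y) (P.map g) := by
  obtain ⟨hc, hnd, hh, hl⟩ := h
  refine ⟨?_, ?_, ?_, ?_⟩
  · rw [List.Chain', List.isChain_map]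
    exact hc.imp (fun a b => harc a b)
  · exact (List.Nodup.map hg) hnd
  · rw [List.head?_map, hh]; rfl
  · rw [List.getLast?_map, hl]; rfl

lemma exists_map_of_forall {W : Type*} {g : V → W} {P : List W}
    (h : ∀ z ∈ P, ∃ u, z = g u) : ∃ P₀ : List V, P = P₀.map g := by
  induction P with
  | nil => exact ⟨[], rfl⟩
  | cons a t ih =>
    obtain ⟨t₀, rfl⟩ := ih (fun z hz => h z (by simp [hz]))
    obtain ⟨u, hu⟩ := h a (by simp)
    exact ⟨u :: t₀, by rw [hu]; rfl⟩

end Stmt13Aux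
namespace Stmt13Aux

structure GoodDigraph (k : ℕ) where
  V : Type
  fin : Fintype V
  A : V → V → Prop
  nE : Nonempty V
  udp : ∀ ⦃x y : V⦄ ⦃P Q : List V⦄, DiPath A x y P → DiPath A x y Q → IntDisj P Q → P = Q
  chrom : ¬ (SimpleGraph.fromRel A).Colorable k

def base : GoodDigraph 0 where
  V := Unit
  fin := inferInstance
  A := fun _ _ => False
  nE := ⟨()⟩
  udp := by
    intro x y P Q hP hQ _
    have h1 : ∀ l : List Unit, DiPath (fun _ _ => False) x y l → l = [x] := by
      intro l hl
      obtain ⟨t, rfl⟩ := dipath_cons_decomp hl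
      cases t with
      | nil => rfl
      | cons b u => exact ((List.isChain_cons_cons.mp hl.1).1).elim
    rw [h1 P hP, h1 Q hQ]
  chrom := by
    rintro ⟨C⟩
    exact (C ()).elim0

section StepSec

variable (k : ℕ) (G : GoodDigraph k)

abbrev SType : Type := Fin ((k+1) * (@Fintype.card G.V G.fin))

abbrev EmbT : Type := G.V ↪ SType k G

abbrev WT : Type := SType k G ⊕ (EmbT k G × G.V)

def arc : WT k G → WT k G → Prop
  | .inr (f,u), .inr (g,v) => f = g ∧ G.A u v
  | .inr (f,u), .inl s => f u = s
  | _, _ => False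

lemma arc_into_inl {s : SType k G} {z : WT k G} (h : arc k G z (.inl s)) :
    ∃ f u, z = .inr (f, u) ∧ f u = s := by
  rcases z with s' | ⟨g, v⟩
  · exact h.elim
  · exact ⟨g, v, rfl, h⟩

lemma arc_into_inr {f : EmbT k G} {v : G.V} {z : WT k G} (h : arc k G z (.inr (f, v))) :
    ∃ u, z = .inr (f, u) ∧ G.A u v := by
  rcases z with s' | ⟨g, u⟩
  · exact h.elim
  · rcases h with ⟨rfl, hA⟩
    exact ⟨u, rfl, hA⟩

lemma closure {f : EmbT k G} {v : G.V} :
    ∀ (P : List (WT k G)) (x : WT k G), DiPath (arc k G) x (.inr (f,v)) P →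
      ∀ z ∈ P, ∃ u, z = .inr (f, u) := by
  intro P
  induction P with
  | nil => intro x hx; exact absurd rfl (dipath_ne_nil hx)
  | cons a t ih =>
    intro x hx z hz
    cases t with
    | nil =>
      have ha : a = .inr (f, v) := by
        have := hx.2.2.2; simpa using this
      rcases List.mem_singleton.mp hz with rfl
      exact ⟨v, ha⟩
    | cons b t' =>
      obtain ⟨-, harc, ht⟩ := dipath_cons hx
      rcases List.mem_cons.mp hz with rfl | hzt
      · obtain ⟨ub, hub⟩ := ih b ht b (by simp)
        rw [hub] at harc
        obtain ⟨ua, hua, -⟩ := arc_into_inr k G harc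
        exact ⟨ua, hua⟩
      · exact ih b ht z hzt

lemma udp_inr {x : WT k G} {f : EmbT k G} {v : G.V} {P Q : List (WT k G)}
    (hP : DiPath (arc k G) x (.inr (f,v)) P)
    (hQ : DiPath (arc k G) x (.inr (f,v)) Q) (hd : IntDisj P Q) : P = Q := by
  have cP := closure k G P x hP
  have cQ := closure k G Q x hQ
  obtain ⟨P₀, rfl⟩ := exists_map_of_forall (g := fun u => (.inr (f,u) : WT k G)) cP
  obtain ⟨Q₀, rfl⟩ := exists_map_of_forall (g := fun u => (.inr (f,u) : WT k G)) cQ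
  obtain ⟨x₀, rfl⟩ := cP x (dipath_mem_head hP)
  have inj : Function.Injective (fun u => (.inr (f,u) : WT k G)) := by
    intro a b hab; simpa using hab
  have hP₀ : DiPath G.A x₀ v P₀ := dipath_map inj (fun u w h => h.2) hP
  have hQ₀ : DiPath G.A x₀ v Q₀ := dipath_map inj (fun u w h => h.2) hQ
  rw [G.udp hP₀ hQ₀ (intdisj_of_map hd)]

lemma dipath_len_one {VV : Type*} {B : VV → VV → Prop} {x y : VV} {P : List VV}
    (hP : DiPath B x y P) (h2 : ¬ 2 ≤ P.length) : P = [x] ∧ x = y := by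
  obtain ⟨t, rfl⟩ := dipath_cons_decomp hP
  cases t with
  | nil =>
    have := hP.2.2.2; simp only [List.getLast?_singleton, Option.some.injEq] at this
    exact ⟨rfl, this⟩
  | cons b u => exfalso; apply h2; simp

lemma udp_main : ∀ ⦃x y : WT k G⦄ ⦃P Q : List (WT k G)⦄,
    DiPath (arc k G) x y P → DiPath (arc k G) x y Q → IntDisj P Q → P = Q := by
  intro x y P Q hP hQ hd
  rcases y with s | ⟨f, v⟩
  case inr => exact udp_inr k G hP hQ hd
  case inl =>
    by_cases h2P : 2 ≤ P.length
    swap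
    · obtain ⟨rfl, rfl⟩ := dipath_len_one hP h2P
      rw [dipath_self hQ]
    by_cases h2Q : 2 ≤ Q.length
    swap
    · obtain ⟨rfl, rfl⟩ := dipath_len_one hQ h2Q
      rw [dipath_self hP]
    obtain ⟨p, hp1, hp2, hp3, hp4⟩ := pen_spec hP h2P
    obtain ⟨q, hq1, hq2, hq3, hq4⟩ := pen_spec hQ h2Q
    obtain ⟨fp, up, rfl, hfp⟩ := arc_into_inl k G hp2
    obtain ⟨fq, uq, rfl, hfq⟩ := arc_into_inl k G hq2
    obtain ⟨x₀, hx₀⟩ := closure k G P.dropLast x hp3 x (dipath_mem_head hp3)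
    obtain ⟨x₀', hx₀'⟩ := closure k G Q.dropLast x hq3 x (dipath_mem_head hq3)
    have hff : fp = fq ∧ x₀ = x₀' := by
      rw [hx₀] at hx₀'
      simpa using hx₀'
    obtain ⟨rfl, -⟩ := hff
    have huu : up = uq := fp.injective (by rw [hfp, hfq])
    subst huu
    have hdd : P.dropLast = Q.dropLast := udp_inr k G hp3 hq3 (intdisj_dropLast hd)
    have dP := dipath_decomp_last hP
    have dQ := dipath_decomp_last hQ
    rw [← dP, ← dQ, hdd]

noncomputable def step : GoodDigraph (k+1) where
  V := WT k G
  fin := by letI := G.fin; infer_instance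
  A := arc k G
  nE := by
    letI := G.fin
    refine ⟨.inl ⟨0, ?_⟩⟩
    have h0 : 0 < Fintype.card G.V := @Fintype.card_pos _ _ G.nE
    exact Nat.mul_pos (Nat.succ_pos k) h0
  udp := udp_main k G
  chrom := by
    letI := G.fin
    rintro ⟨C⟩
    obtain ⟨col, hcol⟩ := Fintype.exists_le_card_fiber_of_mul_le_card
      (fun s : SType k G => C (.inl s)) (n := Fintype.card G.V)
      (by rw [Fintype.card_fin, Fintype.card_fin])
    have hle : Fintype.card G.V ≤ Fintype.card {s : SType k G // C (.inl s) = col} := by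
      classical
      rw [Fintype.card_subtype]
      exact hcol
    obtain ⟨f0⟩ := Function.Embedding.nonempty_iff_card_le.mpr hle
    let f : EmbT k G := f0.trans (Function.Embedding.subtype _)
    have hf : ∀ u : G.V, C (.inl (f u)) = col := fun u => (f0 u).2
    have hnec : ∀ u, C (.inr (f, u)) ≠ col := by
      intro u h
      have hadj : (SimpleGraph.fromRel (arc k G)).Adj (.inr (f,u)) (.inl (f u)) := by
        rw [SimpleGraph.fromRel_adj]
        exact ⟨by simp, Or.inl rfl⟩
      have hval := C.valid hadj
      rw [h, hf u] at hval
      exact hval rfl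
    have hmap : ∀ u : G.V, (finSuccEquiv' col (C (.inr (f,u)))).isSome := by
      intro u
      rcases ho : finSuccEquiv' col (C (.inr (f,u))) with _ | j
      · exfalso
        apply hnec u
        apply (finSuccEquiv' col).injective
        rw [ho, finSuccEquiv'_at]
      · rfl
    refine G.chrom ⟨SimpleGraph.Coloring.mk
      (fun u => (finSuccEquiv' col (C (.inr (f,u)))).get (hmap u)) ?_⟩
    intro u v huv hEq
    rw [SimpleGraph.fromRel_adj] at huv
    obtain ⟨hne', hrel⟩ := huv
    have hadj : (SimpleGraph.fromRel (arc k G)).Adj (.inr (f,u)) (.inr (f,v)) := by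
      rw [SimpleGraph.fromRel_adj]
      refine ⟨by simp [hne'], ?_⟩
      rcases hrel with h | h
      · exact Or.inl ⟨rfl, h⟩
      · exact Or.inr ⟨rfl, h⟩
    have hCC := C.valid hadj
    apply hCC
    apply (finSuccEquiv' col).injective
    rw [← Option.some_get (hmap u), ← Option.some_get (hmap v)]
    exact congrArg some hEq

end StepSec

noncomputable def good : (k : ℕ) → GoodDigraph k
  | 0 => base
  | (k+1) => step k (good k)

end Stmt13Aux
namespace Stmt13Aux

instance nz2 (nn : ℕ) : NeZero (2*nn+2) := ⟨by omega⟩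

section WalkSec
open Fin.NatCast Fin.CommRing

variable {V : Type u}

lemma dipath_cons_of {B : V → V → Prop} {x b y : V} {t : List V}
    (harc : B x b) (ht : DiPath B b y t) (hx : x ∉ t) : DiPath B x y (x :: t) := by
  obtain ⟨hc, hnd, hh, hl⟩ := ht
  refine ⟨?_, List.nodup_cons.mpr ⟨hx, hnd⟩, rfl, ?_⟩
  · rw [List.Chain', List.isChain_cons]
    refine ⟨fun z hz => ?_, hc⟩
    rw [hh, Option.mem_def, Option.some.injEq] at hz
    rw [← hz]; exact harc
  · rw [getLast?_cons_ne x (dipath_ne_nil ⟨hc,hnd,hh,hl⟩)]; exact hl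

lemma dipath_concat {B : V → V → Prop} {x p y : V} {t : List V}
    (ht : DiPath B x p t) (harc : B p y) (hy : y ∉ t) :
    DiPath B x y (t ++ [y]) := by
  obtain ⟨hc, hnd, hh, hl⟩ := ht
  obtain ⟨r, rfl⟩ := dipath_cons_decomp ⟨hc, hnd, hh, hl⟩
  refine ⟨?_, ?_, rfl, List.getLast?_concat⟩
  · rw [List.Chain', List.isChain_append]
    refine ⟨hc, by simp, fun a ha b hb => ?_⟩
    rw [hl, Option.mem_def, Option.some.injEq] at ha
    simp only [List.head?_cons, Option.mem_def, Option.some.injEq] at hb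
    rw [← ha, ← hb]; exact harc
  · rw [List.nodup_append]
    refine ⟨hnd, by simp, fun z hz z2 hz2 hzz => ?_⟩
    simp only [List.mem_singleton] at hz2
    subst hz2; exact hy (hzz ▸ hz)

/-- walk along successive elements -/
def walkFrom {mk : ℕ} [NeZero mk] (i : Fin mk) : ℕ → List (Fin mk)
  | 0 => [i]
  | (t+1) => i :: walkFrom (i+1) t

variable {nn : ℕ}

lemma wf_ne_nil (i : Fin (2*nn+2)) (t : ℕ) : walkFrom i t ≠ [] := by
  cases t <;> simp [walkFrom]

lemma wf_head (i : Fin (2*nn+2)) (t : ℕ) : (walkFrom i t).head? = some i := by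
  cases t <;> rfl

lemma wf_last (i : Fin (2*nn+2)) (t : ℕ) :
    (walkFrom i t).getLast? = some (i + (t : Fin (2*nn+2))) := by
  induction t generalizing i with
  | zero => simp [walkFrom]
  | succ t ih =>
    show (i :: walkFrom (i+1) t).getLast? = _
    rw [getLast?_cons_ne i (wf_ne_nil _ _), ih]
    congr 1
    push_cast
    ring

lemma wf_mem {z : Fin (2*nn+2)} (i : Fin (2*nn+2)) (t : ℕ) :
    z ∈ walkFrom i t ↔ ∃ s, s ≤ t ∧ z = i + (s : Fin (2*nn+2)) := by
  induction t generalizing i with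
  | zero =>
    simp only [walkFrom, List.mem_singleton]
    constructor
    · rintro rfl; exact ⟨0, le_refl _, by simp⟩
    · rintro ⟨s, hs, rfl⟩
      have : s = 0 := Nat.le_zero.mp hs
      simp [this]
  | succ t ih =>
    show z ∈ i :: walkFrom (i+1) t ↔ _
    rw [List.mem_cons, ih]
    constructor
    · rintro (rfl | ⟨s, hs, rfl⟩)
      · exact ⟨0, by omega, by simp⟩
      · exact ⟨s+1, by omega, by push_cast; ring⟩
    · rintro ⟨s, hs, rfl⟩
      cases s with
      | zero => left; simp
      | succ s => right; exact ⟨s, by omega, by push_cast; ring⟩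

lemma cast_inj_small {a b : ℕ} (ha : a < 2*nn+2) (hb : b < 2*nn+2)
    (h : (a : Fin (2*nn+2)) = (b : Fin (2*nn+2))) : a = b := by
  have := congrArg Fin.val h
  rwa [Fin.val_natCast, Fin.val_natCast, Nat.mod_eq_of_lt ha, Nat.mod_eq_of_lt hb] at this

lemma wf_nodup (i : Fin (2*nn+2)) (t : ℕ) (ht : t < 2*nn+2) : (walkFrom i t).Nodup := by
  induction t generalizing i with
  | zero => simp [walkFrom]
  | succ t ih =>
    show (i :: walkFrom (i+1) t).Nodup
    rw [List.nodup_cons]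
    refine ⟨?_, ih (i+1) (by omega)⟩
    rw [wf_mem]
    rintro ⟨s, hs, hiz⟩
    have h0 : (0 : Fin (2*nn+2)) = 1 + (s : Fin (2*nn+2)) := by
      apply add_left_cancel (a := i)
      rw [add_assoc] at hiz
      rw [add_zero]
      exact hiz
    have : ((0 : ℕ) : Fin (2*nn+2)) = ((1 + s : ℕ) : Fin (2*nn+2)) := by
      push_cast
      rw [h0]
    have := cast_inj_small (by omega) (by omega) this
    omega

lemma wf_chain (i : Fin (2*nn+2)) (t : ℕ) :
    (walkFrom i t).Chain' (fun a b => b = a + 1) := by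
  induction t generalizing i with
  | zero => exact List.isChain_singleton _
  | succ t ih =>
    show List.Chain' _ (i :: walkFrom (i+1) t)
    rw [List.Chain', List.isChain_cons]
    refine ⟨fun z hz => ?_, ih (i+1)⟩
    rw [wf_head, Option.mem_def, Option.some.injEq] at hz
    rw [← hz]

lemma wf_dipath (i j : Fin (2*nn+2)) :
    DiPath (fun a b : Fin (2*nn+2) => b = a + 1) i j (walkFrom i (j - i).val) := by
  refine ⟨wf_chain _ _, wf_nodup _ _ (j - i).isLt, wf_head _ _, ?_⟩
  have h : i + (j - i) = j := by abel
  rw [wf_last, Fin.cast_val_eq_self, h]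

end WalkSec

section FinalSec

variable {V₀ : Type} {A₀ : V₀ → V₀ → Prop} {nn : ℕ}

/-- arcs of the final digraph: `A₀` inside, entries `v → α v`, a directed cycle on
`Fin (2*nn+2)`, and exits `β v → v`. -/
def AD (A₀ : V₀ → V₀ → Prop) (α β : V₀ → Fin (2*nn+2)) :
    (V₀ ⊕ Fin (2*nn+2)) → (V₀ ⊕ Fin (2*nn+2)) → Prop
  | .inl u, .inl v => A₀ u v
  | .inl u, .inr j => j = α u
  | .inr j, .inl v => j = β v
  | .inr i, .inr j => j = i + 1

variable {α β : V₀ → Fin (2*nn+2)}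

lemma AD_out_inl {u : V₀} {z} (h : AD A₀ α β (.inl u) z) :
    (∃ v, z = .inl v ∧ A₀ u v) ∨ z = .inr (α u) := by
  rcases z with v | j
  · exact Or.inl ⟨v, rfl, h⟩
  · exact Or.inr (by rw [show j = α u from h])

lemma AD_out_inr {j : Fin (2*nn+2)} {z} (h : AD A₀ α β (.inr j) z) :
    (∃ v, z = .inl v ∧ j = β v) ∨ z = .inr (j + 1) := by
  rcases z with v | i
  · exact Or.inl ⟨v, rfl, h⟩
  · exact Or.inr (by rw [show i = j + 1 from h])

lemma AD_in_inl {v : V₀} {z} (h : AD A₀ α β z (.inl v)) :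
    (∃ u, z = .inl u ∧ A₀ u v) ∨ z = .inr (β v) := by
  rcases z with u | j
  · exact Or.inl ⟨u, rfl, h⟩
  · exact Or.inr (by rw [show j = β v from h])

lemma AD_in_inr {j : Fin (2*nn+2)} {z} (h : AD A₀ α β z (.inr j)) :
    (∃ u, z = .inl u ∧ j = α u) ∨ (∃ i, z = .inr i ∧ j = i + 1) := by
  rcases z with u | i
  · exact Or.inl ⟨u, rfl, h⟩
  · exact Or.inr ⟨i, rfl, h⟩

lemma rwalk_dipath (i j : Fin (2*nn+2)) :
    DiPath (AD A₀ α β) (.inr i) (.inr j) ((walkFrom i (j - i).val).map .inr) := by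
  exact dipath_map_fwd Sum.inr_injective (fun a b hab => hab) (wf_dipath i j)


lemma entry_path (u : V₀) (j : Fin (2*nn+2)) :
    DiPath (AD A₀ α β) (.inl u) (.inr j)
      (.inl u :: (walkFrom (α u) (j - α u).val).map .inr) := by
  refine dipath_cons_of ?_ (rwalk_dipath (α u) j) ?_
  · exact rfl
  · simp

lemma exit_path (j : Fin (2*nn+2)) (v : V₀) :
    DiPath (AD A₀ α β) (.inr j) (.inl v)
      ((walkFrom j (β v - j).val).map .inr ++ [.inl v]) := by
  refine dipath_concat (rwalk_dipath j (β v)) ?_ (by simp)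
  · exact rfl

lemma full_path (u v : V₀) (huv : u ≠ v) :
    DiPath (AD A₀ α β) (.inl u) (.inl v)
      (.inl u :: ((walkFrom (α u) (β v - α u).val).map .inr ++ [.inl v])) := by
  refine dipath_cons_of ?_ (exit_path (α u) v) ?_
  · exact rfl
  · simp [huv]

lemma strongAD : StrongConn (AD A₀ α β) := by
  intro x y
  by_cases hxy : x = y
  · subst hxy; exact ⟨[x], dipath_single x _⟩
  rcases x with u | i <;> rcases y with v | j
  · exact ⟨_, full_path u v (fun h => hxy (congrArg _ h))⟩
  · exact ⟨_, entry_path u j⟩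
  · exact ⟨_, exit_path i v⟩
  · exact ⟨_, rwalk_dipath i j⟩

/-- the special middle vertex of the return cycle -/
def rnF (nn : ℕ) : Fin (2*nn+2) := ⟨nn, by omega⟩

lemma val_succ {c : Fin (2*nn+2)} (h : c.val < 2*nn+1) : (c + 1).val = c.val + 1 := by
  have h1 : (1 : Fin (2*nn+2)).val = 1 := by
    rw [Fin.val_one']
    exact Nat.mod_eq_of_lt (by omega)
  rw [Fin.val_add, h1, Nat.mod_eq_of_lt (by omega)]

lemma R1 (hB : ∀ v, nn + 1 ≤ (β v).val) :
    ∀ (t : List (V₀ ⊕ Fin (2*nn+2))) (c : Fin (2*nn+2)), c.val ≤ nn →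
    ∀ {y₀ : V₀}, DiPath (AD A₀ α β) (.inr c) (.inl y₀) (.inr c :: t) →
    (.inr (rnF nn) : V₀ ⊕ Fin (2*nn+2)) ∈ (.inr c :: t) := by
  intro t
  induction t with
  | nil =>
    intro c hc y₀ hP
    exfalso
    have := hP.2.2.2
    simp at this
  | cons b t' ih =>
    intro c hc y₀ hP
    by_cases hcn : c.val = nn
    · have hcr : c = rnF nn := Fin.ext hcn
      rw [hcr]
      exact List.mem_cons_self
    obtain ⟨-, harc, ht⟩ := dipath_cons hP
    rcases AD_out_inr harc with ⟨w, rfl, hcw⟩ | rfl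
    · exfalso
      have h1 := hB w
      have h2 : c.val = (β w).val := congrArg Fin.val hcw
      omega
    · have hval : (c+1).val = c.val + 1 := val_succ (by omega)
      exact List.mem_cons_of_mem _ (ih (c+1) (by omega) ht)

lemma H1 (hA : ∀ v, (α v).val < nn) (hB : ∀ v, nn + 1 ≤ (β v).val) :
    ∀ (P : List (V₀ ⊕ Fin (2*nn+2))) {x₀ y₀ : V₀},
      DiPath (AD A₀ α β) (.inl x₀) (.inl y₀) P →
      (∃ j, (.inr j : V₀ ⊕ Fin (2*nn+2)) ∈ P) →
      (.inr (rnF nn) : V₀ ⊕ Fin (2*nn+2)) ∈ P := by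
  intro P
  induction P with
  | nil => intro x₀ y₀ hP _; exact absurd rfl (dipath_ne_nil hP)
  | cons a t ih =>
    intro x₀ y₀ hP hex
    obtain ⟨t2, ht2⟩ := dipath_cons_decomp hP
    have ha : a = .inl x₀ := (List.cons.injEq _ _ _ _ ▸ ht2).1
    subst ha
    cases t with
    | nil =>
      exfalso
      obtain ⟨j, hj⟩ := hex
      have := List.mem_singleton.mp hj
      simp at this
    | cons b t' =>
      obtain ⟨-, harc, ht⟩ := dipath_cons hP
      rcases AD_out_inl harc with ⟨u, rfl, -⟩ | rfl
      · obtain ⟨j, hj⟩ := hex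
        have hjt : (.inr j : V₀ ⊕ Fin (2*nn+2)) ∈ .inl u :: t' := by
          rcases List.mem_cons.mp hj with h | h
          · exact absurd h (by simp)
          · exact h
        exact List.mem_cons_of_mem _ (ih ht ⟨j, hjt⟩)
      · exact List.mem_cons_of_mem _ (R1 hB t' (α x₀) (le_of_lt (hA x₀)) ht)

lemma rn_internal (hA : ∀ v, (α v).val < nn) (hB : ∀ v, nn + 1 ≤ (β v).val)
    {x₀ y₀ : V₀} {P : List (V₀ ⊕ Fin (2*nn+2))}
    (hP : DiPath (AD A₀ α β) (.inl x₀) (.inl y₀) P)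
    (hex : ∃ j, (.inr j : V₀ ⊕ Fin (2*nn+2)) ∈ P) :
    (.inr (rnF nn) : V₀ ⊕ Fin (2*nn+2)) ∈ internals P :=
  mem_internals hP.2.2.1 hP.2.2.2 (H1 hA hB P hP hex) (by simp) (by simp)

lemma hpure_eq
    (udp₀ : ∀ ⦃x y : V₀⦄ ⦃P Q : List V₀⦄, DiPath A₀ x y P → DiPath A₀ x y Q → IntDisj P Q → P = Q)
    {x₀ y₀ : V₀} {P Q : List (V₀ ⊕ Fin (2*nn+2))}
    (hP : DiPath (AD A₀ α β) (.inl x₀) (.inl y₀) P)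
    (hQ : DiPath (AD A₀ α β) (.inl x₀) (.inl y₀) Q)
    (hPn : ¬ ∃ j, (.inr j : V₀ ⊕ Fin (2*nn+2)) ∈ P)
    (hQn : ¬ ∃ j, (.inr j : V₀ ⊕ Fin (2*nn+2)) ∈ Q)
    (hd : IntDisj P Q) : P = Q := by
  have hPl : ∀ z ∈ P, ∃ u, z = Sum.inl u := by
    intro z hz; rcases z with u | j
    · exact ⟨u, rfl⟩
    · exact absurd ⟨j, hz⟩ hPn
  have hQl : ∀ z ∈ Q, ∃ u, z = Sum.inl u := by
    intro z hz; rcases z with u | j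
    · exact ⟨u, rfl⟩
    · exact absurd ⟨j, hz⟩ hQn
  obtain ⟨P₀, rfl⟩ := exists_map_of_forall hPl
  obtain ⟨Q₀, rfl⟩ := exists_map_of_forall hQl
  have hP₀ : DiPath A₀ x₀ y₀ P₀ := dipath_map Sum.inl_injective (fun u v h => h) hP
  have hQ₀ : DiPath A₀ x₀ y₀ Q₀ := dipath_map Sum.inl_injective (fun u v h => h) hQ
  rw [udp₀ hP₀ hQ₀ (intdisj_of_map hd)]

lemma in_inr_two (hAinj : Function.Injective α) {j : Fin (2*nn+2)}
    {p q r : V₀ ⊕ Fin (2*nn+2)}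
    (hp : AD A₀ α β p (.inr j)) (hq : AD A₀ α β q (.inr j)) (hr : AD A₀ α β r (.inr j))
    (hpq : p ≠ q) (hpr : p ≠ r) (hqr : q ≠ r) : False := by
  rcases AD_in_inr hp with ⟨u1, rfl, e1⟩ | ⟨i1, rfl, e1⟩ <;>
  rcases AD_in_inr hq with ⟨u2, rfl, e2⟩ | ⟨i2, rfl, e2⟩ <;>
  rcases AD_in_inr hr with ⟨u3, rfl, e3⟩ | ⟨i3, rfl, e3⟩ <;>
  first
    | exact hpq (by rw [hAinj (e1.symm.trans e2)])
    | exact hpr (by rw [hAinj (e1.symm.trans e3)])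
    | exact hqr (by rw [hAinj (e2.symm.trans e3)])
    | exact hpq (by rw [add_right_cancel (e1.symm.trans e2)])
    | exact hpr (by rw [add_right_cancel (e1.symm.trans e3)])
    | exact hqr (by rw [add_right_cancel (e2.symm.trans e3)])

lemma out_inr_two (hBinj : Function.Injective β) {j : Fin (2*nn+2)}
    {p q r : V₀ ⊕ Fin (2*nn+2)}
    (hp : AD A₀ α β (.inr j) p) (hq : AD A₀ α β (.inr j) q) (hr : AD A₀ α β (.inr j) r)
    (hpq : p ≠ q) (hpr : p ≠ r) (hqr : q ≠ r) : False := by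
  rcases AD_out_inr hp with ⟨v1, rfl, e1⟩ | rfl <;>
  rcases AD_out_inr hq with ⟨v2, rfl, e2⟩ | rfl <;>
  rcases AD_out_inr hr with ⟨v3, rfl, e3⟩ | rfl <;>
  first
    | exact hpq (by rw [hBinj (e1.symm.trans e2)])
    | exact hpr (by rw [hBinj (e1.symm.trans e3)])
    | exact hqr (by rw [hBinj (e2.symm.trans e3)])
    | exact hpq rfl
    | exact hpr rfl
    | exact hqr rfl

lemma out_inr_exists {j : Fin (2*nn+2)} {p q : V₀ ⊕ Fin (2*nn+2)}
    (hp : AD A₀ α β (.inr j) p) (hq : AD A₀ α β (.inr j) q) (hpq : p ≠ q) :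
    ∃ v, j = β v := by
  rcases AD_out_inr hp with ⟨v, rfl, e1⟩ | rfl
  · exact ⟨v, e1⟩
  rcases AD_out_inr hq with ⟨v, rfl, e2⟩ | rfl
  · exact ⟨v, e2⟩
  · exact absurd rfl hpq

lemma in_inr_exists {j : Fin (2*nn+2)} {p q : V₀ ⊕ Fin (2*nn+2)}
    (hp : AD A₀ α β p (.inr j)) (hq : AD A₀ α β q (.inr j)) (hpq : p ≠ q) :
    ∃ u, j = α u := by
  rcases AD_in_inr hp with ⟨u, rfl, e1⟩ | ⟨i1, rfl, e1⟩
  · exact ⟨u, e1⟩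
  rcases AD_in_inr hq with ⟨u, rfl, e2⟩ | ⟨i2, rfl, e2⟩
  · exact ⟨u, e2⟩
  · exact absurd (by rw [add_right_cancel (e1.symm.trans e2)]) hpq

lemma noSpindle3 (hA : ∀ v, (α v).val < nn) (hB : ∀ v, nn + 1 ≤ (β v).val)
    (hAinj : Function.Injective α) (hBinj : Function.Injective β)
    (udp₀ : ∀ ⦃x y : V₀⦄ ⦃P Q : List V₀⦄, DiPath A₀ x y P → DiPath A₀ x y Q → IntDisj P Q → P = Q) :
    ¬ Spindle3 (AD A₀ α β) := by
  classical
  rintro ⟨x, y, P1, P2, P3, h1, h2, h3, l1, l2, l3, n12, n13, n23, d12, d13, d23⟩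
  rcases y with y₀ | j
  case inr =>
    obtain ⟨p1, hs1⟩ := pen_spec h1 l1
    obtain ⟨p2, hs2⟩ := pen_spec h2 l2
    obtain ⟨p3, hs3⟩ := pen_spec h3 l3
    exact in_inr_two hAinj hs1.2.1 hs2.2.1 hs3.2.1
      (pen_ne h1 h2 n12 d12 l1 l2 hs1 hs2)
      (pen_ne h1 h3 n13 d13 l1 l3 hs1 hs3)
      (pen_ne h2 h3 n23 d23 l2 l3 hs2 hs3)
  case inl =>
    rcases x with x₀ | j
    case inr =>
      obtain ⟨s1, hs1⟩ := sec_spec h1 l1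
      obtain ⟨s2, hs2⟩ := sec_spec h2 l2
      obtain ⟨s3, hs3⟩ := sec_spec h3 l3
      exact out_inr_two hBinj hs1.2.1 hs2.2.1 hs3.2.1
        (sec_ne h1 h2 n12 d12 l1 l2 hs1 hs2)
        (sec_ne h1 h3 n13 d13 l1 l3 hs1 hs3)
        (sec_ne h2 h3 n23 d23 l2 l3 hs2 hs3)
    case inl =>
      rcases Classical.em (∃ jj : Fin (2*nn+2), (.inr jj : V₀ ⊕ Fin (2*nn+2)) ∈ P1) with r1 | r1
      · rcases Classical.em (∃ jj : Fin (2*nn+2), (.inr jj : V₀ ⊕ Fin (2*nn+2)) ∈ P2) with r2 | r2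
        · exact d12.1 _ (rn_internal hA hB h1 r1) (rn_internal hA hB h2 r2)
        · rcases Classical.em (∃ jj : Fin (2*nn+2), (.inr jj : V₀ ⊕ Fin (2*nn+2)) ∈ P3) with r3 | r3
          · exact d13.1 _ (rn_internal hA hB h1 r1) (rn_internal hA hB h3 r3)
          · exact n23 (hpure_eq udp₀ h2 h3 r2 r3 d23)
      · rcases Classical.em (∃ jj : Fin (2*nn+2), (.inr jj : V₀ ⊕ Fin (2*nn+2)) ∈ P2) with r2 | r2
        · rcases Classical.em (∃ jj : Fin (2*nn+2), (.inr jj : V₀ ⊕ Fin (2*nn+2)) ∈ P3) with r3 | r3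
          · exact d23.1 _ (rn_internal hA hB h2 r2) (rn_internal hA hB h3 r3)
          · exact n13 (hpure_eq udp₀ h1 h3 r1 r3 d13)
        · exact n12 (hpure_eq udp₀ h1 h2 r1 r2 d12)

lemma noB22 (hA : ∀ v, (α v).val < nn) (hB : ∀ v, nn + 1 ≤ (β v).val)
    (hB2 : ∀ v, (β v).val < 2*nn+1)
    (udp₀ : ∀ ⦃x y : V₀⦄ ⦃P Q : List V₀⦄, DiPath A₀ x y P → DiPath A₀ x y Q → IntDisj P Q → P = Q) :
    ¬ Bispindle22 (AD A₀ α β) := by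
  classical
  rintro ⟨x, y, P1, P2, P3, P4, h1, h2, h3, h4, l1, l2, l3, l4, n12, n34,
    d12, d13, d14, d23, d24, d34⟩
  rcases x with x₀ | j
  case inr =>
    obtain ⟨s1, hs1⟩ := sec_spec h1 l1
    obtain ⟨s2, hs2⟩ := sec_spec h2 l2
    obtain ⟨v, hv⟩ := out_inr_exists hs1.2.1 hs2.2.1 (sec_ne h1 h2 n12 d12 l1 l2 hs1 hs2)
    obtain ⟨p3, hp3⟩ := pen_spec h3 l3
    obtain ⟨p4, hp4⟩ := pen_spec h4 l4
    obtain ⟨u, hu⟩ := in_inr_exists hp3.2.1 hp4.2.1 (pen_ne h3 h4 n34 d34 l3 l4 hp3 hp4)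
    have hb := hB v
    have ha := hA u
    have e1 : j.val = (β v).val := congrArg Fin.val hv
    have e2 : j.val = (α u).val := congrArg Fin.val hu
    omega
  case inl =>
    rcases y with y₀ | j
    case inr =>
      obtain ⟨p1, hp1⟩ := pen_spec h1 l1
      obtain ⟨p2, hp2⟩ := pen_spec h2 l2
      obtain ⟨u, hu⟩ := in_inr_exists hp1.2.1 hp2.2.1 (pen_ne h1 h2 n12 d12 l1 l2 hp1 hp2)
      obtain ⟨s3, hs3⟩ := sec_spec h3 l3
      obtain ⟨s4, hs4⟩ := sec_spec h4 l4
      obtain ⟨v, hv⟩ := out_inr_exists hs3.2.1 hs4.2.1 (sec_ne h3 h4 n34 d34 l3 l4 hs3 hs4)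
      have hb := hB v
      have ha := hA u
      have e1 : j.val = (β v).val := congrArg Fin.val hv
      have e2 : j.val = (α u).val := congrArg Fin.val hu
      omega
    case inl =>
      have key : ∀ {Pa Pb : List (V₀ ⊕ Fin (2*nn+2))},
          DiPath (AD A₀ α β) (.inl x₀) (.inl y₀) Pa →
          DiPath (AD A₀ α β) (.inl y₀) (.inl x₀) Pb →
          (∃ jj, (.inr jj : V₀ ⊕ Fin (2*nn+2)) ∈ Pa) →
          (∃ jj, (.inr jj : V₀ ⊕ Fin (2*nn+2)) ∈ Pb) → IntDisj Pa Pb → False := by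
        intro Pa Pb hPa hPb ra rb hdab
        exact hdab.1 _ (rn_internal hA hB hPa ra) (rn_internal hA hB hPb rb)
      rcases Classical.em (∃ jj : Fin (2*nn+2), (.inr jj : V₀ ⊕ Fin (2*nn+2)) ∈ P1) with r1 | r1
      · rcases Classical.em (∃ jj : Fin (2*nn+2), (.inr jj : V₀ ⊕ Fin (2*nn+2)) ∈ P3) with r3 | r3
        · exact key h1 h3 r1 r3 d13
        · rcases Classical.em (∃ jj : Fin (2*nn+2), (.inr jj : V₀ ⊕ Fin (2*nn+2)) ∈ P4) with r4 | r4
          · exact key h1 h4 r1 r4 d14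
          · exact n34 (hpure_eq udp₀ h3 h4 r3 r4 d34)
      · rcases Classical.em (∃ jj : Fin (2*nn+2), (.inr jj : V₀ ⊕ Fin (2*nn+2)) ∈ P2) with r2 | r2
        · rcases Classical.em (∃ jj : Fin (2*nn+2), (.inr jj : V₀ ⊕ Fin (2*nn+2)) ∈ P3) with r3 | r3
          · exact key h2 h3 r2 r3 d23
          · rcases Classical.em (∃ jj : Fin (2*nn+2), (.inr jj : V₀ ⊕ Fin (2*nn+2)) ∈ P4) with r4 | r4
            · exact key h2 h4 r2 r4 d24
            · exact n34 (hpure_eq udp₀ h3 h4 r3 r4 d34)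
        · exact n12 (hpure_eq udp₀ h1 h2 r1 r2 d12)

end FinalSec

end Stmt13Aux
/-- Theorem 8: for every `k` there is a strong digraph with chromatic number
greater than `k` containing no 3-spindle and no `(2+2)`-bispindle. -/
theorem stmt13 (k : ℕ) :
    ∃ (V : Type) (_ : Fintype V) (A : V → V → Prop),
      StrongConn A ∧ ¬ Spindle3 A ∧ ¬ Bispindle22 A ∧ (k : ℕ∞) < dchrom A := by
  classical
  set G := Stmt13Aux.good k with hGdef
  letI : Fintype G.V := G.fin
  set nn := Fintype.card G.V with hnn
  let e : G.V ≃ Fin nn := Fintype.equivFin G.V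
  let αf : G.V → Fin (2*nn+2) := fun v => ⟨(e v).val, by have := (e v).isLt; omega⟩
  let βf : G.V → Fin (2*nn+2) := fun v => ⟨nn + 1 + (e v).val, by have := (e v).isLt; omega⟩
  have hA : ∀ v, (αf v).val < nn := fun v => (e v).isLt
  have hB : ∀ v, nn + 1 ≤ (βf v).val := fun v => Nat.le_add_right _ _
  have hB2 : ∀ v, (βf v).val < 2*nn+1 := by
    intro v
    show nn + 1 + (e v).val < 2*nn+1
    have := (e v).isLt; omega
  have hAinj : Function.Injective αf := by
    intro a b hab
    apply e.injective
    have h1 := congrArg Fin.val hab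
    have h2 : (e a).val = (e b).val := h1
    exact Fin.ext h2
  have hBinj : Function.Injective βf := by
    intro a b hab
    apply e.injective
    apply Fin.ext
    have h1 := congrArg Fin.val hab
    have h2 : nn + 1 + (e a).val = nn + 1 + (e b).val := h1
    omega
  refine ⟨G.V ⊕ Fin (2*nn+2), inferInstance, Stmt13Aux.AD G.A αf βf,
    Stmt13Aux.strongAD,
    Stmt13Aux.noSpindle3 hA hB hAinj hBinj G.udp,
    Stmt13Aux.noB22 hA hB hB2 G.udp, ?_⟩
  show (k : ℕ∞) < (SimpleGraph.fromRel (Stmt13Aux.AD G.A αf βf)).chromaticNumber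
  by_contra hlt
  have hcol : (SimpleGraph.fromRel (Stmt13Aux.AD G.A αf βf)).Colorable k :=
    SimpleGraph.chromaticNumber_le_iff_colorable.mp (not_lt.mp hlt)
  obtain ⟨C⟩ := hcol
  apply G.chrom
  refine ⟨SimpleGraph.Coloring.mk (fun v => C (.inl v)) ?_⟩
  intro u v huv
  apply C.valid
  rw [SimpleGraph.fromRel_adj] at huv ⊢
  obtain ⟨hne', hrel⟩ := huv
  refine ⟨by simp [hne'], ?_⟩
  rcases hrel with h | h
  · exact Or.inl h
  · exact Or.inr h
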